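/- If an aSCF ρ admits two AS-version R-SEU representations with correct interim beliefs, given by (SubS, μ, {τ_{q,u}}) and (SubS', μ', {τ'_{q,u}}) with SubS, SubS' finite sets of pairwise distinct non-constant SEUs, then there is a bijection φ : SubS → SubS' with φ(q,u) = (q, a·u + b) for some a > 0, b ∈ ℝ (depending on (q,u)), and μ(q,u,s) = μ'(φ(q,u),s) for all s ∈ S. (Essential uniqueness of the static R-SEU representation.) -/

import Mathlib

open Finset

/-- A simple lottery on `Z`. -/
def IsLottery {Z : Type*} (p : Z →₀ ℝ) : Prop :=
  (∀ z, 0 ≤ p z) ∧ p.sum (fun _ x => x) = 1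

/-- `u` is an affine (expected-utility) functional on lotteries. -/
def IsAffineOnLotteries {Z : Type*} (u : (Z →₀ ℝ) → ℝ) : Prop :=
  ∀ p q : Z →₀ ℝ, IsLottery p → IsLottery q → ∀ a : ℝ, 0 ≤ a → a ≤ 1 →
    u (a • p + (1 - a) • q) = a * u p + (1 - a) * u q

lemma lottery_sum_support {Z : Type*} {p : Z →₀ ℝ} (hp : IsLottery p) :
    ∑ z ∈ p.support, p z = 1 := hp.2

lemma single_lottery {Z : Type*} (z : Z) : IsLottery (Finsupp.single z (1:ℝ)) := by
  classical
  constructor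
  · intro z'
    rw [Finsupp.single_apply]
    split <;> norm_num
  · simp [Finsupp.sum_single_index]

lemma affine_rep_aux {Z : Type*} (u : (Z →₀ ℝ) → ℝ) (hu : IsAffineOnLotteries u) :
    ∀ (n : ℕ) (p : Z →₀ ℝ), IsLottery p → p.support.card ≤ n →
      u p = ∑ z ∈ p.support, p z * u (Finsupp.single z 1) := by
  intro n
  induction n with
  | zero =>
    intro p hp hc
    exfalso
    have : p.support = ∅ := Finset.card_eq_zero.mp (Nat.le_zero.mp hc)
    have h1 := lottery_sum_support hp
    rw [this] at h1
    simpa using h1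
  | succ n ih =>
    intro p hp hc
    classical
    by_cases hc' : p.support.card ≤ n
    · exact ih p hp hc'
    have hcard : p.support.card = n + 1 := le_antisymm hc (Nat.lt_of_not_le hc')
    have hne : p.support.Nonempty := Finset.card_pos.mp (by omega)
    obtain ⟨z₀, hz₀⟩ := hne
    set a := p z₀ with ha
    have ha0 : 0 < a := lt_of_le_of_ne (hp.1 z₀) (Ne.symm (Finsupp.mem_support_iff.mp hz₀))
    have ha1 : a ≤ 1 := by
      rw [← lottery_sum_support hp]
      exact Finset.single_le_sum (fun z _ => hp.1 z) hz₀
    by_cases hone : a = 1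
    · have hsupp : p.support = {z₀} := by
        apply Finset.eq_singleton_iff_unique_mem.mpr
        refine ⟨hz₀, fun z hz => ?_⟩
        by_contra hzz
        have h1 := lottery_sum_support hp
        have h2 : a + ∑ z' ∈ p.support.erase z₀, p z' = 1 := by
          rw [ha, Finset.add_sum_erase _ _ hz₀]; exact h1
        have h3 : ∑ z' ∈ p.support.erase z₀, p z' = 0 := by linarith [h2, hone]
        have h4 : p z = 0 := by
          have := (Finset.sum_eq_zero_iff_of_nonneg (fun z' _ => hp.1 z')).mp h3 z
            (Finset.mem_erase.mpr ⟨hzz, hz⟩)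
          exact this
        exact Finsupp.mem_support_iff.mp hz h4
      have hpeq : p = Finsupp.single z₀ 1 := by
        ext z
        rcases eq_or_ne z z₀ with rfl | hzz
        · simp only [Finsupp.single_eq_same]
          rw [← ha]; exact hone
        · have : z ∉ p.support := by rw [hsupp]; simp [hzz]
          rw [Finsupp.notMem_support_iff.mp this, Finsupp.single_eq_of_ne hzz]
      rw [hsupp, Finset.sum_singleton, ← ha, hone, one_mul, hpeq]
    have halt : a < 1 := lt_of_le_of_ne ha1 hone
    have h1a : (0:ℝ) < 1 - a := by linarith
    set qq : Z →₀ ℝ := (1 - a)⁻¹ • p.erase z₀ with hqq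
    have hqapp : ∀ z, qq z = (1 - a)⁻¹ * (p.erase z₀) z := fun z => rfl
    have hqsupp : qq.support = p.support.erase z₀ := by
      rw [hqq, Finsupp.support_smul_eq (inv_ne_zero (ne_of_gt h1a)), Finsupp.support_erase]
    have hqlot : IsLottery qq := by
      constructor
      · intro z
        rw [hqapp]
        rcases eq_or_ne z z₀ with rfl | hzz
        · simp [Finsupp.erase_same]
        · rw [Finsupp.erase_ne hzz]
          exact mul_nonneg (by positivity) (hp.1 z)
      · show ∑ z ∈ qq.support, qq z = 1
        rw [hqsupp]
        have : ∑ z ∈ p.support.erase z₀, qq z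
            = (1-a)⁻¹ * ∑ z ∈ p.support.erase z₀, p z := by
          rw [Finset.mul_sum]
          apply Finset.sum_congr rfl
          intro z hz
          rw [hqapp, Finsupp.erase_ne (Finset.mem_erase.mp hz).1]
        rw [this]
        have h2 : a + ∑ z' ∈ p.support.erase z₀, p z' = 1 := by
          rw [ha, Finset.add_sum_erase _ _ hz₀]; exact lottery_sum_support hp
        have : ∑ z' ∈ p.support.erase z₀, p z' = 1 - a := by linarith
        rw [this]
        field_simp
    have hcomb : p = a • Finsupp.single z₀ 1 + (1 - a) • qq := by
      ext z
      rcases eq_or_ne z z₀ with rfl | hzz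
      · simp [hqapp, Finsupp.erase_same, Finsupp.single_eq_same]
        exact ha.symm
      · simp only [Finsupp.coe_add, Finsupp.coe_smul, Pi.add_apply, Pi.smul_apply,
          smul_eq_mul, hqapp, Finsupp.erase_ne hzz, Finsupp.single_eq_of_ne hzz]
        field_simp
        ring
    have hcard' : qq.support.card ≤ n := by
      rw [hqsupp, Finset.card_erase_of_mem hz₀, hcard]
      omega
    have huq := ih qq hqlot hcard'
    have key := hu (Finsupp.single z₀ 1) qq (single_lottery z₀) hqlot a ha0.le ha1
    rw [← hcomb] at key
    rw [key, huq, hqsupp, Finset.mul_sum]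
    rw [← Finset.add_sum_erase _ (fun z => p z * u (Finsupp.single z 1)) hz₀]
    congr 1
    apply Finset.sum_congr rfl
    intro z hz
    rw [hqapp, Finsupp.erase_ne (Finset.mem_erase.mp hz).1]
    field_simp

lemma pair_sep {Z : Type*} (w₁ w₂ : Z → ℝ) (hw₂ : ∃ z₁ z₂, w₂ z₁ ≠ w₂ z₂) :
    ∃ T : Finset Z, ∀ a b : ℝ, 0 < a → (∀ z ∈ T, w₁ z = a * w₂ z + b) →
      ∃ a' : ℝ, 0 < a' ∧ ∃ b' : ℝ, ∀ z, w₁ z = a' * w₂ z + b' := by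
  classical
  by_cases h : ∃ a' : ℝ, 0 < a' ∧ ∃ b' : ℝ, ∀ z, w₁ z = a' * w₂ z + b'
  · exact ⟨∅, fun _ _ _ _ => h⟩
  obtain ⟨z₁, z₂, hz⟩ := hw₂
  have hzne : w₂ z₁ - w₂ z₂ ≠ 0 := sub_ne_zero.mpr hz
  set a₀ : ℝ := (w₁ z₁ - w₁ z₂) / (w₂ z₁ - w₂ z₂) with ha₀
  set b₀ : ℝ := w₁ z₁ - a₀ * w₂ z₁ with hb₀
  have hforce : ∀ a b : ℝ, w₁ z₁ = a * w₂ z₁ + b → w₁ z₂ = a * w₂ z₂ + b →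
      a = a₀ ∧ b = b₀ := by
    intro a b h1 h2
    have haa : a = a₀ := by
      rw [ha₀, eq_div_iff hzne]
      rw [h1, h2]; ring
    exact ⟨haa, by rw [hb₀, ← haa, h1]; ring⟩
  rcases le_or_gt a₀ 0 with h0 | h0
  · refine ⟨{z₁, z₂}, fun a b ha hfit => ?_⟩
    have h1 := hfit z₁ (by simp)
    have h2 := hfit z₂ (by simp)
    obtain ⟨haa, -⟩ := hforce a b h1 h2
    exact absurd (haa ▸ ha) (not_lt.mpr h0)
  · push_neg at h
    obtain ⟨z₃, hz₃⟩ := h a₀ h0 b₀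
    refine ⟨{z₁, z₂, z₃}, fun a b ha hfit => ?_⟩
    have h1 := hfit z₁ (by simp)
    have h2 := hfit z₂ (by simp)
    have h3 := hfit z₃ (by simp)
    obtain ⟨haa, hbb⟩ := hforce a b h1 h2
    rw [haa, hbb] at h3
    exact absurd h3 hz₃

lemma key_ineq {S : Type*} [Fintype S] {Z : Type*} (Z₀ : Finset Z)
    (q1 q2 : S → ℝ) (w1 w2 : Z → ℝ)
    (hq1 : ∀ s, 0 ≤ q1 s) (hs1 : ∑ s, q1 s = 1)
    (hq2 : ∀ s, 0 ≤ q2 s) (hs2 : ∑ s, q2 s = 1)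
    (hw1 : ∑ z ∈ Z₀, w1 z ^ 2 = 1) (hw2 : ∑ z ∈ Z₀, w2 z ^ 2 = 1) :
    (∑ s, q1 s * q2 s) * (∑ z ∈ Z₀, w1 z * w2 z)
      < Real.sqrt (∑ s, q1 s ^ 2) * Real.sqrt (∑ s, q2 s ^ 2)
    ∨ ((∀ s, q1 s = q2 s) ∧ ∀ z ∈ Z₀, w1 z = w2 z) := by
  set A := ∑ s, q1 s * q2 s with hA
  set B := ∑ z ∈ Z₀, w1 z * w2 z with hB
  set N1 := Real.sqrt (∑ s, q1 s ^ 2) with hN1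
  set N2 := Real.sqrt (∑ s, q2 s ^ 2) with hN2
  have hq1sq : (0:ℝ) < ∑ s, q1 s ^ 2 := by
    by_contra hle
    push_neg at hle
    have hzz : ∑ s, q1 s ^ 2 = 0 :=
      le_antisymm hle (Finset.sum_nonneg (fun s _ => sq_nonneg (q1 s)))
    have : ∀ s ∈ (univ : Finset S), q1 s = 0 := fun s hs =>
      pow_eq_zero_iff (n := 2) (by norm_num) |>.mp
        ((Finset.sum_eq_zero_iff_of_nonneg (fun s _ => sq_nonneg (q1 s))).mp hzz s hs)
    rw [Finset.sum_eq_zero this] at hs1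
    norm_num at hs1
  have hq2sq : (0:ℝ) < ∑ s, q2 s ^ 2 := by
    by_contra hle
    push_neg at hle
    have hzz : ∑ s, q2 s ^ 2 = 0 :=
      le_antisymm hle (Finset.sum_nonneg (fun s _ => sq_nonneg (q2 s)))
    have : ∀ s ∈ (univ : Finset S), q2 s = 0 := fun s hs =>
      pow_eq_zero_iff (n := 2) (by norm_num) |>.mp
        ((Finset.sum_eq_zero_iff_of_nonneg (fun s _ => sq_nonneg (q2 s))).mp hzz s hs)
    rw [Finset.sum_eq_zero this] at hs2
    norm_num at hs2
  have hN1pos : 0 < N1 := Real.sqrt_pos.mpr hq1sq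
  have hN2pos : 0 < N2 := Real.sqrt_pos.mpr hq2sq
  have hN1sq : N1 ^ 2 = ∑ s, q1 s ^ 2 := Real.sq_sqrt hq1sq.le
  have hN2sq : N2 ^ 2 = ∑ s, q2 s ^ 2 := Real.sq_sqrt hq2sq.le
  have hA0 : 0 ≤ A := Finset.sum_nonneg (fun s _ => mul_nonneg (hq1 s) (hq2 s))
  -- Cauchy–Schwarz for A, by hand
  have hexp : ∑ s, (N2 * q1 s - N1 * q2 s) ^ 2 = 2 * N1 * N2 * (N1 * N2 - A) := by
    have : ∀ s, (N2 * q1 s - N1 * q2 s) ^ 2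
        = N2 ^ 2 * q1 s ^ 2 + N1 ^ 2 * q2 s ^ 2 - 2 * N1 * N2 * (q1 s * q2 s) := by
      intro s; ring
    rw [Finset.sum_congr rfl (fun s _ => this s)]
    rw [Finset.sum_sub_distrib, Finset.sum_add_distrib, ← Finset.mul_sum, ← Finset.mul_sum,
      ← Finset.mul_sum, ← hA, hN1sq, hN2sq]
    rw [← hN1sq, ← hN2sq]; ring
  have hCS : A ≤ N1 * N2 := by
    nlinarith [Finset.sum_nonneg (fun s (_ : s ∈ univ) => sq_nonneg (N2 * q1 s - N1 * q2 s)),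
      hexp, mul_pos hN1pos hN2pos]
  have hwexp : ∑ z ∈ Z₀, (w1 z - w2 z) ^ 2 = 2 - 2 * B := by
    have : ∀ z, (w1 z - w2 z) ^ 2 = w1 z ^ 2 + w2 z ^ 2 - 2 * (w1 z * w2 z) := by
      intro z; ring
    rw [Finset.sum_congr rfl (fun z _ => this z), Finset.sum_sub_distrib,
      Finset.sum_add_distrib, hw1, hw2, ← Finset.mul_sum, ← hB]
    ring
  have hB1 : B ≤ 1 := by
    nlinarith [Finset.sum_nonneg (fun z (_ : z ∈ Z₀) => sq_nonneg (w1 z - w2 z)), hwexp]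
  by_cases hstrict : A * B < N1 * N2
  · exact Or.inl hstrict
  right
  push_neg at hstrict
  -- then A * B = N1 * N2, forcing A = N1 N2 and B = 1
  have hABle : A * B ≤ N1 * N2 := by
    rcases le_or_gt B 0 with hB0 | hB0
    · calc A * B ≤ 0 := mul_nonpos_of_nonneg_of_nonpos hA0 hB0
        _ ≤ N1 * N2 := (mul_pos hN1pos hN2pos).le
    · calc A * B ≤ (N1 * N2) * B := by
            exact mul_le_mul_of_nonneg_right hCS hB0.le
        _ ≤ N1 * N2 := by
            nlinarith [mul_pos hN1pos hN2pos]
  have hABeq : A * B = N1 * N2 := le_antisymm hABle hstrict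
  have hApos : 0 < A := by
    rcases lt_or_eq_of_le hA0 with h | h
    · exact h
    · exfalso; rw [← h] at hABeq; simp at hABeq
      nlinarith [mul_pos hN1pos hN2pos]
  have hBpos : 0 < B := by
    nlinarith [mul_pos hN1pos hN2pos]
  have hAeq : A = N1 * N2 := by nlinarith
  have hBeq : B = 1 := by
    have : A * B = A * 1 := by rw [mul_one, hABeq, hAeq]
    exact mul_left_cancel₀ (ne_of_gt hApos) this
  constructor
  · -- q1 = q2
    have hzero : ∑ s, (N2 * q1 s - N1 * q2 s) ^ 2 = 0 := by
      rw [hexp, hAeq]; ring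
    have hpt : ∀ s, N2 * q1 s - N1 * q2 s = 0 := by
      intro s
      have := (Finset.sum_eq_zero_iff_of_nonneg
        (fun s (_ : s ∈ univ) => sq_nonneg (N2 * q1 s - N1 * q2 s))).mp hzero s (mem_univ s)
      exact pow_eq_zero_iff (n := 2) (by norm_num) |>.mp this
    have hNs : N2 = N1 := by
      have h1 : ∑ s, (N2 * q1 s) = ∑ s, (N1 * q2 s) := by
        apply Finset.sum_congr rfl
        intro s _
        have := hpt s; linarith
      rw [← Finset.mul_sum, ← Finset.mul_sum, hs1, hs2] at h1
      simpa using h1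
    intro s
    have := hpt s
    rw [hNs] at this
    have : N1 * (q1 s - q2 s) = 0 := by linarith
    rcases mul_eq_zero.mp this with h | h
    · exact absurd h (ne_of_gt hN1pos)
    · linarith
  · -- w1 = w2 on Z₀
    intro z hz
    have hzero : ∑ z ∈ Z₀, (w1 z - w2 z) ^ 2 = 0 := by
      rw [hwexp, hBeq]; ring
    have := (Finset.sum_eq_zero_iff_of_nonneg
      (fun z (_ : z ∈ Z₀) => sq_nonneg (w1 z - w2 z))).mp hzero z hz
    have := pow_eq_zero_iff (n := 2) (by norm_num) |>.mp this
    linarith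

/-- Essential uniqueness of the static AS-version R-SEU representation with correct
interim beliefs: two representations of the same aSCF are related by a bijection
`φ` of the subjective state spaces that preserves beliefs, transforms Bernoulli
utilities by positive affine transformations, and preserves the measure `μ`. -/
theorem static_RSEU_uniqueness
    {S Z X X' : Type*} [Fintype S] [Fintype X] [Fintype X']
    (q : X → S → ℝ) (u : X → (Z →₀ ℝ) → ℝ) (μ : X → S → ℝ)
    (τ : X → (S → Z →₀ ℝ) → Finset (S → Z →₀ ℝ) → ℝ)
    (q' : X' → S → ℝ) (u' : X' → (Z →₀ ℝ) → ℝ) (μ' : X' → S → ℝ)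
    (τ' : X' → (S → Z →₀ ℝ) → Finset (S → Z →₀ ℝ) → ℝ)
    -- each (q x, u x) is a non-constant SEU
    (hqprob : ∀ x, (∀ s, 0 ≤ q x s) ∧ (∑ s, q x s) = 1)
    (haff : ∀ x, IsAffineOnLotteries (u x))
    (hnc : ∀ x, ∃ p p', IsLottery p ∧ IsLottery p' ∧ u x p ≠ u x p')
    (hdist : ∀ x y, x ≠ y → ¬(q x = q y ∧ ∃ a : ℝ, 0 < a ∧ ∃ b : ℝ,
      ∀ p, IsLottery p → u x p = a * u y p + b))
    (hqprob' : ∀ x', (∀ s, 0 ≤ q' x' s) ∧ (∑ s, q' x' s) = 1)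
    (haff' : ∀ x', IsAffineOnLotteries (u' x'))
    (hnc' : ∀ x', ∃ p p', IsLottery p ∧ IsLottery p' ∧ u' x' p ≠ u' x' p')
    (hdist' : ∀ x' y', x' ≠ y' → ¬(q' x' = q' y' ∧ ∃ a : ℝ, 0 < a ∧ ∃ b : ℝ,
      ∀ p, IsLottery p → u' x' p = a * u' y' p + b))
    -- μ, μ' are probability measures with full marginal support and correct interim beliefs
    (hμ0 : ∀ x s, 0 ≤ μ x s) (hμ1 : ∑ x, ∑ s, μ x s = 1)
    (hμfull : ∀ x, 0 < ∑ s, μ x s)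
    (hcib : ∀ x s, μ x s = (∑ s', μ x s') * q x s)
    (hμ0' : ∀ x' s, 0 ≤ μ' x' s) (hμ1' : ∑ x', ∑ s, μ' x' s = 1)
    (hμfull' : ∀ x', 0 < ∑ s, μ' x' s)
    (hcib' : ∀ x' s, μ' x' s = (∑ s', μ' x' s') * q' x' s)
    -- regular tie-breakers
    (hτreg : ∀ x f A, τ x f A ≠ 0 → f ∈ A ∧
      ∀ g ∈ A, (∑ s, q x s * u x (g s)) ≤ ∑ s, q x s * u x (f s))
    (hτ1 : ∀ x (A : Finset (S → Z →₀ ℝ)), A.Nonempty →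
      (∀ g ∈ A, ∀ s, IsLottery (g s)) → ∑ f ∈ A, τ x f A = 1)
    (hτreg' : ∀ x' f A, τ' x' f A ≠ 0 → f ∈ A ∧
      ∀ g ∈ A, (∑ s, q' x' s * u' x' (g s)) ≤ ∑ s, q' x' s * u' x' (f s))
    (hτ1' : ∀ x' (A : Finset (S → Z →₀ ℝ)), A.Nonempty →
      (∀ g ∈ A, ∀ s, IsLottery (g s)) → ∑ f ∈ A, τ' x' f A = 1)
    -- both represent the same aSCF ρ
    (ρ : (S → Z →₀ ℝ) → Finset (S → Z →₀ ℝ) → S → ℝ)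
    (hrep : ∀ f A s, f ∈ A → (∀ g ∈ A, ∀ s', IsLottery (g s')) →
      ρ f A s = ∑ x, μ x s * τ x f A)
    (hrep' : ∀ f A s, f ∈ A → (∀ g ∈ A, ∀ s', IsLottery (g s')) →
      ρ f A s = ∑ x', μ' x' s * τ' x' f A) :
    ∃ φ : X ≃ X', ∀ x : X,
      q' (φ x) = q x ∧
      (∃ a : ℝ, 0 < a ∧ ∃ b : ℝ, ∀ p, IsLottery p → u' (φ x) p = a * u x p + b) ∧
      ∀ s, μ x s = μ' (φ x) s := by
  classical
  -- nonemptiness of X, X', S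
  rcases isEmpty_or_nonempty X with hXe | hXne
  · exfalso; rw [Finset.univ_eq_empty, Finset.sum_empty] at hμ1; norm_num at hμ1
  rcases isEmpty_or_nonempty X' with hXe' | hXne'
  · exfalso; rw [Finset.univ_eq_empty, Finset.sum_empty] at hμ1'; norm_num at hμ1'
  -- combined index
  set QI : X ⊕ X' → S → ℝ := Sum.elim q q' with hQI
  set UI : X ⊕ X' → (Z →₀ ℝ) → ℝ := Sum.elim u u' with hUI
  set W : X ⊕ X' → Z → ℝ := fun i z => UI i (Finsupp.single z 1) with hW
  have hQI0 : ∀ i s, 0 ≤ QI i s := by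
    rintro (x | x') s
    exacts [(hqprob x).1 s, (hqprob' x').1 s]
  have hQI1 : ∀ i, ∑ s, QI i s = 1 := by
    rintro (x | x')
    exacts [(hqprob x).2, (hqprob' x').2]
  have hUIaff : ∀ i, IsAffineOnLotteries (UI i) := by
    rintro (x | x')
    exacts [haff x, haff' x']
  have hUInc : ∀ i, ∃ p p', IsLottery p ∧ IsLottery p' ∧ UI i p ≠ UI i p' := by
    rintro (x | x')
    exacts [hnc x, hnc' x']
  have hrepU : ∀ i (p : Z →₀ ℝ), IsLottery p → UI i p = ∑ z ∈ p.support, p z * W i z :=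
    fun i p hp => affine_rep_aux (UI i) (hUIaff i) p.support.card p hp le_rfl
  -- nonconstancy of W
  have hWnc : ∀ i, ∃ z₁ z₂, W i z₁ ≠ W i z₂ := by
    intro i
    by_contra hcon
    push_neg at hcon
    obtain ⟨p, p', hp, hp', hne⟩ := hUInc i
    have hps : p.support.Nonempty := by
      by_contra he
      rw [Finset.not_nonempty_iff_eq_empty] at he
      have h1 := lottery_sum_support hp
      rw [he, Finset.sum_empty] at h1
      norm_num at h1
    obtain ⟨ζ, hζ⟩ := hps
    have hval : ∀ (r : Z →₀ ℝ), IsLottery r → UI i r = W i ζ := by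
      intro r hr
      have hcg : ∀ z ∈ r.support, r z * W i z = r z * W i ζ := fun z _ => by
        rw [hcon z ζ]
      rw [hrepU i r hr, Finset.sum_congr rfl hcg,
        ← Finset.sum_mul, lottery_sum_support hr, one_mul]
    exact hne (by rw [hval p hp, hval p' hp'])
  choose ζ₁ ζ₂ hζw using hWnc
  choose T hT using fun (i j : X ⊕ X') => pair_sep (W i) (W j) ⟨ζ₁ j, ζ₂ j, hζw j⟩
  set Z₀ : Finset Z :=
    ((univ : Finset ((X ⊕ X') × (X ⊕ X'))).biUnion fun ij => T ij.1 ij.2) ∪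
      ((univ : Finset (X ⊕ X')).biUnion fun i => {ζ₁ i, ζ₂ i}) with hZ₀
  have hTsub : ∀ i j, T i j ⊆ Z₀ := fun i j z hz =>
    Finset.mem_union_left _ (Finset.mem_biUnion.mpr ⟨(i, j), mem_univ _, hz⟩)
  have hζ₁mem : ∀ i, ζ₁ i ∈ Z₀ := fun i =>
    Finset.mem_union_right _ (Finset.mem_biUnion.mpr ⟨i, mem_univ _, by simp⟩)
  have hζ₂mem : ∀ i, ζ₂ i ∈ Z₀ := fun i =>
    Finset.mem_union_right _ (Finset.mem_biUnion.mpr ⟨i, mem_univ _, by simp⟩)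
  have hZ₀ne : Z₀.Nonempty := ⟨ζ₁ (Sum.inl (Classical.arbitrary X)), hζ₁mem _⟩
  set n : ℝ := (Z₀.card : ℝ) with hn
  have hnpos : 0 < n := by
    rw [hn]
    exact_mod_cast Finset.card_pos.mpr hZ₀ne
  -- normalization of the utilities
  set m : X ⊕ X' → ℝ := fun i => (∑ z ∈ Z₀, W i z) / n with hm
  set V : X ⊕ X' → ℝ := fun i => ∑ z ∈ Z₀, (W i z - m i) ^ 2 with hV
  have hVpos : ∀ i, 0 < V i := by
    intro i
    rcases lt_or_eq_of_le (Finset.sum_nonneg fun z (_ : z ∈ Z₀) => sq_nonneg (W i z - m i))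
      with h | h
    · exact h
    · exfalso
      have hall : ∀ z ∈ Z₀, W i z = m i := by
        intro z hz
        have := (Finset.sum_eq_zero_iff_of_nonneg
          (fun z (_ : z ∈ Z₀) => sq_nonneg (W i z - m i))).mp h.symm z hz
        have := pow_eq_zero_iff (n := 2) (by norm_num) |>.mp this
        linarith
      exact hζw i (by rw [hall _ (hζ₁mem i), hall _ (hζ₂mem i)])
  set σ : X ⊕ X' → ℝ := fun i => Real.sqrt (V i) with hσ
  have hσpos : ∀ i, 0 < σ i := fun i => Real.sqrt_pos.mpr (hVpos i)
  have hσsq : ∀ i, σ i ^ 2 = V i := fun i => Real.sq_sqrt (hVpos i).le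
  set wh : X ⊕ X' → Z → ℝ := fun i z => (W i z - m i) / σ i with hwh
  have hwhsum : ∀ i, ∑ z ∈ Z₀, wh i z = 0 := by
    intro i
    have h1 : ∑ z ∈ Z₀, (W i z - m i) = 0 := by
      rw [Finset.sum_sub_distrib, Finset.sum_const, nsmul_eq_mul]
      simp only [hm]
      rw [← hn]
      field_simp
      ring
    simp only [hwh]
    rw [← Finset.sum_div, h1, zero_div]
  have hwhsq : ∀ i, ∑ z ∈ Z₀, wh i z ^ 2 = 1 := by
    intro i
    simp only [hwh]
    have : ∀ z, ((W i z - m i) / σ i) ^ 2 = (W i z - m i) ^ 2 * (1 / σ i ^ 2) := by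
      intro z; field_simp
    rw [Finset.sum_congr rfl fun z _ => this z, ← Finset.sum_mul, hσsq i]
    rw [show ∑ z ∈ Z₀, (W i z - m i) ^ 2 = V i from rfl, mul_one_div]
    exact div_self (ne_of_gt (hVpos i))
  have hwhbd : ∀ i z, z ∈ Z₀ → |wh i z| ≤ 1 := by
    intro i z hz
    have h1 : wh i z ^ 2 ≤ 1 := by
      rw [← hwhsq i]
      exact Finset.single_le_sum (fun z _ => sq_nonneg (wh i z)) hz
    nlinarith [abs_nonneg (wh i z), sq_abs (wh i z)]
  have hWdecomp : ∀ i z, W i z = σ i * wh i z + m i := by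
    intro i z
    simp only [hwh]
    field_simp [ne_of_gt (hσpos i)]
    ring
  -- norms of beliefs
  set N : X ⊕ X' → ℝ := fun i => Real.sqrt (∑ s, QI i s ^ 2) with hN
  have hQsqpos : ∀ i, 0 < ∑ s, QI i s ^ 2 := by
    intro i
    by_contra hle
    push_neg at hle
    have hzz : ∑ s, QI i s ^ 2 = 0 :=
      le_antisymm hle (Finset.sum_nonneg fun s _ => sq_nonneg (QI i s))
    have hall : ∀ s ∈ (univ : Finset S), QI i s = 0 := fun s hs =>
      pow_eq_zero_iff (n := 2) (by norm_num) |>.mp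
        ((Finset.sum_eq_zero_iff_of_nonneg (fun s _ => sq_nonneg (QI i s))).mp hzz s hs)
    have := hQI1 i
    rw [Finset.sum_eq_zero hall] at this
    norm_num at this
  have hNpos : ∀ i, 0 < N i := fun i => Real.sqrt_pos.mpr (hQsqpos i)
  have hNsq : ∀ i, N i ^ 2 = ∑ s, QI i s ^ 2 := fun i => Real.sq_sqrt (hQsqpos i).le
  have hQle1 : ∀ i s, QI i s ≤ 1 := by
    intro i s
    rw [← hQI1 i]
    exact Finset.single_le_sum (fun s _ => hQI0 i s) (mem_univ s)
  set K : ℝ := Real.sqrt (Fintype.card S) with hK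
  haveI hSne : Nonempty S := by
    by_contra h
    rw [not_nonempty_iff] at h
    have := hQI1 (Sum.inl (Classical.arbitrary X))
    rw [Finset.univ_eq_empty, Finset.sum_empty] at this
    norm_num at this
  have hKpos : 0 < K := Real.sqrt_pos.mpr (by exact_mod_cast Fintype.card_pos)
  have hNK : ∀ i, 1 ≤ K * N i := by
    intro i
    have h1 : ((1 : ℝ)) ≤ (Fintype.card S : ℝ) * ∑ s, QI i s ^ 2 := by
      have h2 := sq_sum_le_card_mul_sum_sq (s := (univ : Finset S)) (f := QI i)
      rw [hQI1 i, one_pow, Finset.card_univ] at h2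
      exact h2
    calc (1 : ℝ) = Real.sqrt 1 := Real.sqrt_one.symm
      _ ≤ Real.sqrt ((Fintype.card S : ℝ) * ∑ s, QI i s ^ 2) := Real.sqrt_le_sqrt h1
      _ = K * N i := by
          rw [hK, hN, ← Real.sqrt_mul (by positivity)]
  set ε : ℝ := 1 / (n * (K + 1)) with hε
  have hεpos : 0 < ε := by rw [hε]; exact div_pos one_pos (mul_pos hnpos (by linarith))
  have hεK : ε * K < 1 / n := by
    rw [hε, div_mul_eq_mul_div, one_mul, div_lt_div_iff₀ (mul_pos hnpos (by linarith)) hnpos]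
    nlinarith
  -- lottery entries
  set c : (X ⊕ X') → S → Z → ℝ := fun i s z => 1 / n + ε * (QI i s * wh i z / N i) with hc
  have htbd : ∀ i s z, z ∈ Z₀ → |QI i s * wh i z / N i| ≤ K := by
    intro i s z hz
    rw [abs_div, abs_mul, abs_of_pos (hNpos i), abs_of_nonneg (hQI0 i s),
      div_le_iff₀ (hNpos i)]
    calc QI i s * |wh i z| ≤ 1 * 1 :=
          mul_le_mul (hQle1 i s) (hwhbd i z hz) (abs_nonneg _) zero_le_one
      _ = 1 := by norm_num
      _ ≤ K * N i := hNK i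
  have hcpos : ∀ i s z, z ∈ Z₀ → 0 ≤ c i s z := by
    intro i s z hz
    have h1 := (abs_le.mp (htbd i s z hz)).1
    simp only [hc]
    nlinarith [hεpos, hεK]
  have hcsum : ∀ i s, ∑ z ∈ Z₀, c i s z = 1 := by
    intro i s
    simp only [hc]
    rw [Finset.sum_add_distrib, Finset.sum_const, nsmul_eq_mul]
    have h2 : ∑ z ∈ Z₀, ε * (QI i s * wh i z / N i)
        = (ε * QI i s / N i) * ∑ z ∈ Z₀, wh i z := by
      rw [Finset.mul_sum]
      exact Finset.sum_congr rfl fun z _ => by ring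
    rw [h2, hwhsum i, mul_zero, add_zero, ← hn]
    field_simp [ne_of_gt hnpos]
  -- the acts
  set F : (X ⊕ X') → S → Z →₀ ℝ := fun i s => ∑ z ∈ Z₀, Finsupp.single z (c i s z) with hF
  have hFite : ∀ i s z, (F i s) z = if z ∈ Z₀ then c i s z else 0 := by
    intro i s z
    simp only [hF]
    rw [Finsupp.finset_sum_apply]
    rw [Finset.sum_congr rfl fun z' _ => Finsupp.single_apply]
    exact Finset.sum_ite_eq' Z₀ z (c i s)
  have hFapp : ∀ i s z, z ∈ Z₀ → (F i s) z = c i s z := by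
    intro i s z hz; rw [hFite, if_pos hz]
  have hFapp0 : ∀ i s z, z ∉ Z₀ → (F i s) z = 0 := by
    intro i s z hz; rw [hFite, if_neg hz]
  have hFsupp : ∀ i s, (F i s).support ⊆ Z₀ := by
    intro i s z hz
    by_contra h
    exact Finsupp.mem_support_iff.mp hz (hFapp0 i s z h)
  have hFlot : ∀ i s, IsLottery (F i s) := by
    intro i s
    constructor
    · intro z
      by_cases hz : z ∈ Z₀
      · rw [hFapp i s z hz]; exact hcpos i s z hz
      · rw [hFapp0 i s z hz]
    · show ∑ z ∈ (F i s).support, F i s z = 1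
      rw [Finset.sum_subset (hFsupp i s) fun z _ hns => Finsupp.notMem_support_iff.mp hns,
        Finset.sum_congr rfl fun z hz => hFapp i s z hz, hcsum i s]
  -- value computations
  set A2 : (X ⊕ X') → (X ⊕ X') → ℝ := fun i j => ∑ s, QI i s * QI j s with hA2
  set B2 : (X ⊕ X') → (X ⊕ X') → ℝ := fun i j => ∑ z ∈ Z₀, wh i z * wh j z with hB2
  have hUF : ∀ i j s, UI i (F j s) = m i + (ε * σ i * B2 i j / N j) * QI j s := by
    intro i j s
    rw [hrepU i _ (hFlot j s),
      Finset.sum_subset (hFsupp j s) (fun z _ hns => by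
        rw [Finsupp.notMem_support_iff.mp hns, zero_mul]),
      Finset.sum_congr rfl (fun z hz => by rw [hFapp j s z hz])]
    have hterm : ∀ z ∈ Z₀, c j s z * W i z =
        (σ i / n) * wh i z + (1 / n) * m i
          + (ε * QI j s * σ i / N j) * (wh i z * wh j z)
          + (ε * QI j s * m i / N j) * wh j z := by
      intro z _
      rw [hWdecomp i z]
      simp only [hc]
      ring
    rw [Finset.sum_congr rfl hterm]
    rw [Finset.sum_add_distrib, Finset.sum_add_distrib, Finset.sum_add_distrib,
      ← Finset.mul_sum, ← Finset.mul_sum, ← Finset.mul_sum, ← Finset.mul_sum,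
      hwhsum i, hwhsum j, Finset.sum_const, nsmul_eq_mul, ← hn]
    rw [show ∑ z ∈ Z₀, wh i z * wh j z = B2 i j from rfl]
    field_simp [ne_of_gt hnpos, ne_of_gt (hNpos j)]
    ring
  have hVal : ∀ i j, ∑ s, QI i s * UI i (F j s)
      = m i + ε * σ i * (A2 i j * B2 i j) / N j := by
    intro i j
    rw [Finset.sum_congr rfl fun s _ => by rw [hUF i j s]]
    have : ∀ s, QI i s * (m i + (ε * σ i * B2 i j / N j) * QI j s)
        = m i * QI i s + (ε * σ i * B2 i j / N j) * (QI i s * QI j s) := by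
      intro s; ring
    rw [Finset.sum_congr rfl fun s _ => this s, Finset.sum_add_distrib,
      ← Finset.mul_sum, ← Finset.mul_sum, hQI1 i,
      show ∑ s, QI i s * QI j s = A2 i j from rfl]
    ring
  have hValdiag : ∀ i, ∑ s, QI i s * UI i (F i s) = m i + ε * σ i * N i := by
    intro i
    rw [hVal i i]
    have hA2d : A2 i i = N i ^ 2 := by
      rw [hNsq i]
      exact Finset.sum_congr rfl fun s _ => (sq (QI i s)) ▸ by ring
    have hB2d : B2 i i = 1 := by
      rw [← hwhsq i]
      exact Finset.sum_congr rfl fun z _ => by ring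
    rw [hA2d, hB2d, mul_one]
    have hh : ε * σ i * N i ^ 2 / N i = ε * σ i * N i := by
      rw [sq, ← mul_assoc, mul_div_assoc, div_self (ne_of_gt (hNpos i)), mul_one]
    rw [hh]
  -- act equality vs parameter equality
  have hNeq_of_q : ∀ i j, (∀ s, QI i s = QI j s) → N i = N j := by
    intro i j hq
    simp only [hN]
    congr 1
    exact Finset.sum_congr rfl fun s _ => by rw [hq s]
  have hFeq_of_params : ∀ i j, (∀ s, QI i s = QI j s) → (∀ z ∈ Z₀, wh i z = wh j z) →
      F i = F j := by
    intro i j hq hw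
    have hNij := hNeq_of_q i j hq
    funext s
    ext z
    by_cases hz : z ∈ Z₀
    · rw [hFapp i s z hz, hFapp j s z hz]
      simp only [hc]
      rw [hq s, hw z hz, hNij]
    · rw [hFapp0 i s z hz, hFapp0 j s z hz]
  have hparams_of_Feq : ∀ i j, F i = F j →
      (∀ s, QI i s = QI j s) ∧ (∀ z ∈ Z₀, wh i z = wh j z) := by
    intro i j hFe
    have hkey : ∀ s z, z ∈ Z₀ → QI i s * wh i z / N i = QI j s * wh j z / N j := by
      intro s z hz
      have hce : c i s z = c j s z := by
        rw [← hFapp i s z hz, ← hFapp j s z hz, hFe]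
      simp only [hc] at hce
      have := add_left_cancel hce
      exact mul_left_cancel₀ (ne_of_gt hεpos) this
    have h1 : ∀ s, QI i s / N i = QI j s / N j * B2 j i := by
      intro s
      have e1 : ∑ z ∈ Z₀, (QI i s * wh i z / N i) * wh i z
          = ∑ z ∈ Z₀, (QI j s * wh j z / N j) * wh i z :=
        Finset.sum_congr rfl fun z hz => by rw [hkey s z hz]
      have e2 : ∑ z ∈ Z₀, (QI i s * wh i z / N i) * wh i z = QI i s / N i := by
        have : ∀ z, (QI i s * wh i z / N i) * wh i z = (QI i s / N i) * wh i z ^ 2 :=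
          fun z => by ring
        rw [Finset.sum_congr rfl fun z _ => this z, ← Finset.mul_sum, hwhsq i, mul_one]
      have e3 : ∑ z ∈ Z₀, (QI j s * wh j z / N j) * wh i z
          = QI j s / N j * B2 j i := by
        have : ∀ z, (QI j s * wh j z / N j) * wh i z = (QI j s / N j) * (wh j z * wh i z) :=
          fun z => by ring
        rw [Finset.sum_congr rfl fun z _ => this z, ← Finset.mul_sum]
      rw [← e2, e1, e3]
    have h2 : 1 / N i = B2 j i / N j := by
      have e1 : ∑ s, QI i s / N i = ∑ s, QI j s / N j * B2 j i :=
        Finset.sum_congr rfl fun s _ => h1 s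
      rw [← Finset.sum_div, hQI1 i] at e1
      rw [e1]
      have : ∀ s, QI j s / N j * B2 j i = QI j s * (B2 j i / N j) := fun s => by ring
      rw [Finset.sum_congr rfl fun s _ => this s, ← Finset.sum_mul, hQI1 j, one_mul]
    have hqeq : ∀ s, QI i s = QI j s := by
      intro s
      have h3 : QI i s * (1 / N i) = QI j s * (1 / N i) := by
        calc QI i s * (1 / N i) = QI i s / N i := by ring
          _ = QI j s / N j * B2 j i := h1 s
          _ = QI j s * (B2 j i / N j) := by ring
          _ = QI j s * (1 / N i) := by rw [← h2]
      exact mul_right_cancel₀ (one_div_ne_zero (ne_of_gt (hNpos i))) h3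
    refine ⟨hqeq, ?_⟩
    have hNij := hNeq_of_q i j hqeq
    obtain ⟨s₀, hs₀⟩ : ∃ s, 0 < QI i s := by
      by_contra hcon
      push_neg at hcon
      have : ∑ s, QI i s = 0 :=
        Finset.sum_eq_zero fun s _ => le_antisymm (hcon s) (hQI0 i s)
      rw [hQI1 i] at this
      norm_num at this
    intro z hz
    have h4 := hkey s₀ z hz
    rw [← hqeq s₀, ← hNij] at h4
    have h5 : QI i s₀ * wh i z = QI i s₀ * wh j z := by
      rw [div_eq_mul_inv, div_eq_mul_inv] at h4
      exact mul_right_cancel₀ (inv_ne_zero (ne_of_gt (hNpos i))) h4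
    exact mul_left_cancel₀ (ne_of_gt hs₀) h5
  -- strict preference for one's own act
  have hstrict : ∀ i j, F j ≠ F i →
      ∑ s, QI i s * UI i (F j s) < ∑ s, QI i s * UI i (F i s) := by
    intro i j hne
    rcases key_ineq Z₀ (QI i) (QI j) (wh i) (wh j) (hQI0 i) (hQI1 i) (hQI0 j) (hQI1 j)
      (hwhsq i) (hwhsq j) with h | h
    · rw [hVal i j, hValdiag i]
      have hNN : A2 i j * B2 i j < N i * N j := by
        simp only [hN]
        exact h
      have hdiv : A2 i j * B2 i j / N j < N i := by
        rw [div_lt_iff₀ (hNpos j)]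
        exact hNN
      have hes : 0 < ε * σ i := mul_pos hεpos (hσpos i)
      have : ε * σ i * (A2 i j * B2 i j) / N j = (ε * σ i) * (A2 i j * B2 i j / N j) := by
        ring
      rw [this]
      have := mul_lt_mul_of_pos_left hdiv hes
      linarith
    · exact absurd (hFeq_of_params j i (fun s => (h.1 s).symm)
        (fun z hz => (h.2 z hz).symm)) hne
  -- the separating menu
  set MA : Finset (S → Z →₀ ℝ) := Finset.image F univ with hMA
  have hFmem : ∀ i, F i ∈ MA := fun i => Finset.mem_image_of_mem F (mem_univ i)
  have hMAlot : ∀ g ∈ MA, ∀ s, IsLottery (g s) := by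
    intro g hg s
    obtain ⟨i, -, rfl⟩ := Finset.mem_image.mp hg
    exact hFlot i s
  have hMAlot' : ∀ g ∈ MA, ∀ s', IsLottery (g s') := hMAlot
  have hMAne : MA.Nonempty := ⟨F (Sum.inl (Classical.arbitrary X)), hFmem _⟩
  -- combined tie-breaking
  set TT : (X ⊕ X') → (S → Z →₀ ℝ) → Finset (S → Z →₀ ℝ) → ℝ := Sum.elim τ τ' with hTT
  have hTTreg : ∀ i f A₀, TT i f A₀ ≠ 0 → f ∈ A₀ ∧
      ∀ g ∈ A₀, (∑ s, QI i s * UI i (g s)) ≤ ∑ s, QI i s * UI i (f s) := by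
    rintro (x | x') f A₀ hne0
    · simpa only [hQI, hUI, Sum.elim_inl] using
        hτreg x f A₀ (by simpa only [hTT, Sum.elim_inl] using hne0)
    · simpa only [hQI, hUI, Sum.elim_inr] using
        hτreg' x' f A₀ (by simpa only [hTT, Sum.elim_inr] using hne0)
  have hTT1 : ∀ i, ∑ f ∈ MA, TT i f MA = 1 := by
    rintro (x | x')
    · simpa only [hTT, Sum.elim_inl] using hτ1 x MA hMAne hMAlot
    · simpa only [hTT, Sum.elim_inr] using hτ1' x' MA hMAne hMAlot
  have hτ0 : ∀ i g, g ∈ MA → g ≠ F i → TT i g MA = 0 := by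
    intro i g hg hgne
    by_contra h
    obtain ⟨j, -, rfl⟩ := Finset.mem_image.mp hg
    exact absurd ((hTTreg i (F j) MA h).2 (F i) (hFmem i))
      (not_le.mpr (hstrict i j hgne))
  have hτdiag : ∀ i, TT i (F i) MA = 1 := by
    intro i
    have h1 := hTT1 i
    rwa [Finset.sum_eq_single_of_mem (F i) (hFmem i) (fun g hg hne => hτ0 i g hg hne)] at h1
  -- act equality implies SEU equivalence
  have hglob : ∀ i j, F i = F j →
      ∃ a : ℝ, 0 < a ∧ ∃ b : ℝ, ∀ p, IsLottery p → UI i p = a * UI j p + b := by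
    intro i j hFe
    obtain ⟨hqe, hwe⟩ := hparams_of_Feq i j hFe
    have hfit : ∀ z ∈ T i j, W i z = (σ i / σ j) * W j z + (m i - (σ i / σ j) * m j) := by
      intro z hz
      have hz₀ : z ∈ Z₀ := hTsub i j hz
      calc W i z = σ i * wh i z + m i := hWdecomp i z
        _ = σ i * ((W j z - m j) / σ j) + m i := by
            rw [hwe z hz₀]
        _ = (σ i / σ j) * W j z + (m i - (σ i / σ j) * m j) := by ring
    obtain ⟨a', ha', b', hb'⟩ := hT i j (σ i / σ j)
      (m i - (σ i / σ j) * m j) (div_pos (hσpos i) (hσpos j)) hfit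
    refine ⟨a', ha', b', fun p hp => ?_⟩
    rw [hrepU i p hp, hrepU j p hp]
    rw [Finset.sum_congr rfl fun z (_ : z ∈ p.support) =>
      (by rw [hb' z] : p z * W i z = p z * (a' * W j z + b'))]
    have : ∀ z, p z * (a' * W j z + b') = a' * (p z * W j z) + b' * p z := fun z => by ring
    rw [Finset.sum_congr rfl fun z _ => this z, Finset.sum_add_distrib,
      ← Finset.mul_sum, ← Finset.mul_sum, lottery_sum_support hp, mul_one]
  -- injectivity within each family
  have hinjX : ∀ x y : X, F (Sum.inl x) = F (Sum.inl y) → x = y := by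
    intro x y hFe
    by_contra hne
    obtain ⟨a', ha', b', hb'⟩ := hglob (Sum.inl x) (Sum.inl y) hFe
    refine hdist x y hne ⟨funext fun s => ?_, a', ha', b', fun p hp => ?_⟩
    · have := (hparams_of_Feq _ _ hFe).1 s
      simpa only [hQI, Sum.elim_inl] using this
    · have := hb' p hp
      simpa only [hUI, Sum.elim_inl] using this
  have hinjX' : ∀ x y : X', F (Sum.inr x) = F (Sum.inr y) → x = y := by
    intro x y hFe
    by_contra hne
    obtain ⟨a', ha', b', hb'⟩ := hglob (Sum.inr x) (Sum.inr y) hFe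
    refine hdist' x y hne ⟨funext fun s => ?_, a', ha', b', fun p hp => ?_⟩
    · have := (hparams_of_Feq _ _ hFe).1 s
      simpa only [hQI, Sum.elim_inr] using this
    · have := hb' p hp
      simpa only [hUI, Sum.elim_inr] using this
  -- aSCF values on the separating menu
  have hρX : ∀ (x : X) s, ρ (F (Sum.inl x)) MA s = μ x s := by
    intro x s
    rw [hrep _ _ _ (hFmem _) hMAlot']
    rw [Finset.sum_eq_single_of_mem x (mem_univ x) ?_]
    · have h1 : τ x (F (Sum.inl x)) MA = 1 := by
        have := hτdiag (Sum.inl x)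
        simpa only [hTT, Sum.elim_inl] using this
      rw [h1, mul_one]
    · intro y _ hne
      have h0 : τ y (F (Sum.inl x)) MA = 0 := by
        have := hτ0 (Sum.inl y) (F (Sum.inl x)) (hFmem _)
          (fun h => hne (hinjX x y h).symm)
        simpa only [hTT, Sum.elim_inl] using this
      rw [h0, mul_zero]
  have hρX' : ∀ (x' : X') s, ρ (F (Sum.inr x')) MA s = μ' x' s := by
    intro x' s
    rw [hrep' _ _ _ (hFmem _) hMAlot']
    rw [Finset.sum_eq_single_of_mem x' (mem_univ x') ?_]
    · have h1 : τ' x' (F (Sum.inr x')) MA = 1 := by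
        have := hτdiag (Sum.inr x')
        simpa only [hTT, Sum.elim_inr] using this
      rw [h1, mul_one]
    · intro y _ hne
      have h0 : τ' y (F (Sum.inr x')) MA = 0 := by
        have := hτ0 (Sum.inr y) (F (Sum.inr x')) (hFmem _)
          (fun h => hne (hinjX' x' y h).symm)
        simpa only [hTT, Sum.elim_inr] using this
      rw [h0, mul_zero]
  -- matching
  have hmatch : ∀ x : X, ∃ x' : X', F (Sum.inr x') = F (Sum.inl x) := by
    intro x
    by_contra hcon
    push_neg at hcon
    have h0 : ∀ s, ρ (F (Sum.inl x)) MA s = 0 := by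
      intro s
      rw [hrep' _ _ _ (hFmem _) hMAlot']
      apply Finset.sum_eq_zero
      intro x' _
      have : τ' x' (F (Sum.inl x)) MA = 0 := by
        have := hτ0 (Sum.inr x') (F (Sum.inl x)) (hFmem _) (fun h => hcon x' h.symm)
        simpa only [hTT, Sum.elim_inr] using this
      rw [this, mul_zero]
    have : ∑ s, μ x s = 0 := by
      calc ∑ s, μ x s = ∑ s, ρ (F (Sum.inl x)) MA s :=
            Finset.sum_congr rfl fun s _ => (hρX x s).symm
        _ = 0 := Finset.sum_eq_zero fun s _ => h0 s
    exact absurd this (ne_of_gt (hμfull x))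
  have hmatch' : ∀ x' : X', ∃ x : X, F (Sum.inl x) = F (Sum.inr x') := by
    intro x'
    by_contra hcon
    push_neg at hcon
    have h0 : ∀ s, ρ (F (Sum.inr x')) MA s = 0 := by
      intro s
      rw [hrep _ _ _ (hFmem _) hMAlot']
      apply Finset.sum_eq_zero
      intro x _
      have : τ x (F (Sum.inr x')) MA = 0 := by
        have := hτ0 (Sum.inl x) (F (Sum.inr x')) (hFmem _) (fun h => hcon x h.symm)
        simpa only [hTT, Sum.elim_inl] using this
      rw [this, mul_zero]
    have : ∑ s, μ' x' s = 0 := by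
      calc ∑ s, μ' x' s = ∑ s, ρ (F (Sum.inr x')) MA s :=
            Finset.sum_congr rfl fun s _ => (hρX' x' s).symm
        _ = 0 := Finset.sum_eq_zero fun s _ => h0 s
    exact absurd this (ne_of_gt (hμfull' x'))
  choose φ0 hφ0 using hmatch
  choose ψ0 hψ0 using hmatch'
  have hli : Function.LeftInverse ψ0 φ0 := fun x => hinjX _ _ (by rw [hψ0 (φ0 x), hφ0 x])
  have hri : Function.RightInverse ψ0 φ0 := fun x' => hinjX' _ _ (by rw [hφ0 (ψ0 x'), hψ0 x'])
  refine ⟨⟨φ0, ψ0, hli, hri⟩, fun x => ?_⟩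
  simp only [Equiv.coe_fn_mk]
  have hFe := hφ0 x
  obtain ⟨hqe, hwe⟩ := hparams_of_Feq _ _ hFe
  refine ⟨funext fun s => ?_, ?_, ?_⟩
  · have := hqe s
    simpa only [hQI, Sum.elim_inl, Sum.elim_inr] using this
  · obtain ⟨a', ha', b', hb'⟩ := hglob _ _ hFe
    refine ⟨a', ha', b', fun p hp => ?_⟩
    have := hb' p hp
    simpa only [hUI, Sum.elim_inl, Sum.elim_inr] using this
  · intro s
    have h1 := hρX x s
    have h2 : ρ (F (Sum.inl x)) MA s = μ' (φ0 x) s := by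
      rw [hrep' _ _ _ (hFmem _) hMAlot']
      rw [Finset.sum_eq_single_of_mem (φ0 x) (mem_univ _) ?_]
      · have hd : τ' (φ0 x) (F (Sum.inl x)) MA = 1 := by
          have := hτdiag (Sum.inr (φ0 x))
          rw [hFe] at this
          simpa only [hTT, Sum.elim_inr] using this
        rw [hd, mul_one]
      · intro y _ hne
        have h0 : τ' y (F (Sum.inl x)) MA = 0 := by
          have : F (Sum.inl x) ≠ F (Sum.inr y) := by
            intro h
            exact hne (hinjX' y (φ0 x) (by rw [← h, hFe]))
          have h00 := hτ0 (Sum.inr y) (F (Sum.inl x)) (hFmem _) this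
          simpa only [hTT, Sum.elim_inr] using h00
        rw [h0, mul_zero]
    rw [← h1, h2]
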